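/- Let N_r ≥ 3 be an integer, set n = 2N_r, and define G_{n,k}(u) = ∑_{i=0}^{k−1} [n!·C(k−1,i)·(−1)^i / ((n−k+i+1)·(n−k)!·(k−1)!)] · u^{n−k+i+1}. Define Q_ORS(u) = [(N_r−1)/(2N_r−1)]·G_{n,2}(u) + [(N_r+2)/(2(2N_r−1))]·G_{n,3}(u) + ∑_{k=4}^{N_r+1} [2·N_r·C(N_r,k−1)/((2N_r−(k−1))·C(2N_r,k−1))]·G_{n,k}(u). Then lim_{u→0⁺} Q_ORS(u)/u^{N_r} = 2. -/

import Mathlib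

/-- `G n k u = ∑_{i=0}^{k−1} n!·C(k−1,i)·(−1)^i / ((n−k+i+1)(n−k)!(k−1)!) · u^{n−k+i+1}`,
the CDF of the `k`-th largest of `n` i.i.d. random variables expressed as a
polynomial in the common per-entry CDF value `u`. -/
noncomputable def orderCDF (n k : ℕ) (u : ℝ) : ℝ :=
  ∑ i ∈ Finset.range k,
    ((n.factorial : ℝ) * (((k - 1).choose i : ℝ)) * (-1 : ℝ) ^ i
        / (((n : ℝ) - (k : ℝ) + (i : ℝ) + 1) * ((n - k).factorial : ℝ)
            * ((k - 1).factorial : ℝ)))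
      * u ^ (n - k + i + 1)

noncomputable def shiftCDF (n k m : ℕ) (u : ℝ) : ℝ :=
  ∑ i ∈ Finset.range k,
    ((n.factorial : ℝ) * (((k - 1).choose i : ℝ)) * (-1 : ℝ) ^ i
        / (((n : ℝ) - (k : ℝ) + (i : ℝ) + 1) * ((n - k).factorial : ℝ)
            * ((k - 1).factorial : ℝ)))
      * u ^ (n - k + i + 1 - m)

lemma orderCDF_eq_shift (n k m : ℕ) (h : m ≤ n - k + 1) (u : ℝ) :
    orderCDF n k u = u ^ m * shiftCDF n k m u := by
  unfold orderCDF shiftCDF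
  rw [Finset.mul_sum]
  refine Finset.sum_congr rfl fun i _ => ?_
  have he : u ^ (n - k + i + 1) = u ^ m * u ^ (n - k + i + 1 - m) := by
    rw [← pow_add]; congr 1; omega
  rw [he]; ring

lemma shiftCDF_zero (n k m : ℕ) (h : m ≤ n - k) : shiftCDF n k m 0 = 0 := by
  unfold shiftCDF
  refine Finset.sum_eq_zero fun i _ => ?_
  have : n - k + i + 1 - m ≠ 0 := by omega
  rw [zero_pow this, mul_zero]

lemma continuous_shiftCDF (n k m : ℕ) : Continuous (shiftCDF n k m) := by
  unfold shiftCDF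
  exact continuous_finset_sum _ fun i _ => (continuous_const.mul (continuous_pow _))

lemma shiftCDF_top (Nr : ℕ) (hNr : 1 ≤ Nr) :
    shiftCDF (2 * Nr) (Nr + 1) Nr 0 = ((2 * Nr).choose Nr : ℝ) := by
  unfold shiftCDF
  rw [Finset.sum_eq_single 0]
  · have h1 : 2 * Nr - (Nr + 1) + 0 + 1 - Nr = 0 := by omega
    have h2 : 2 * Nr - (Nr + 1) = Nr - 1 := by omega
    have h3 : (Nr + 1 - 1) = Nr := by omega
    rw [h1, h2, h3]
    simp only [Nat.choose_zero_right, pow_zero, Nat.cast_one, pow_zero, mul_one]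
    have hc : ((2 * Nr).choose Nr : ℝ) * (Nr.factorial : ℝ) * (Nr.factorial : ℝ)
        = ((2 * Nr).factorial : ℝ) := by
      have := Nat.choose_mul_factorial_mul_factorial (show Nr ≤ 2 * Nr by omega)
      have h4 : 2 * Nr - Nr = Nr := by omega
      rw [h4] at this
      exact_mod_cast congrArg (Nat.cast : ℕ → ℝ) this
    have hNrfac : (((2 * Nr : ℕ) : ℝ) - ((Nr + 1 : ℕ) : ℝ) + ((0 : ℕ) : ℝ) + 1) = (Nr : ℝ) := by
      push_cast; ring
    rw [hNrfac]
    have hfacNr : (Nr : ℝ) * ((Nr - 1).factorial : ℝ) = (Nr.factorial : ℝ) := by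
      have h5 : Nr = (Nr - 1) + 1 := by omega
      rw [h5]; push_cast [Nat.factorial_succ]; ring_nf
    have hNrpos : (0:ℝ) < (Nr : ℝ) := by exact_mod_cast hNr
    rw [div_eq_iff (by positivity), ← hc, ← hfacNr]
    ring
  · intro i _ hi
    have : 2 * Nr - (Nr + 1) + i + 1 - Nr = i := by omega
    rw [this, zero_pow hi, mul_zero]
  · intro h; simp at h

/-- For `Nr ≥ 3`, the two-user ORS outage bound
`Q_ORS(u) = (Nr−1)/(2Nr−1)·G_{2Nr,2}(u) + (Nr+2)/(2(2Nr−1))·G_{2Nr,3}(u)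
  + ∑_{k=4}^{Nr+1} 2·Nr·C(Nr,k−1)/((2Nr−(k−1))·C(2Nr,k−1))·G_{2Nr,k}(u)`
satisfies `lim_{u→0⁺} Q_ORS(u)/u^{Nr} = 2`. -/
theorem ORS_outage_bound_limit (Nr : ℕ) (hNr : 3 ≤ Nr) :
    Filter.Tendsto
      (fun u : ℝ =>
        (((Nr : ℝ) - 1) / (2 * (Nr : ℝ) - 1) * orderCDF (2 * Nr) 2 u
          + ((Nr : ℝ) + 2) / (2 * (2 * (Nr : ℝ) - 1)) * orderCDF (2 * Nr) 3 u
          + ∑ k ∈ Finset.Icc 4 (Nr + 1),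
              (2 * (Nr : ℝ) * (Nr.choose (k - 1) : ℝ))
                / ((2 * (Nr : ℝ) - ((k : ℝ) - 1)) * (((2 * Nr).choose (k - 1) : ℝ)))
                * orderCDF (2 * Nr) k u) / u ^ Nr)
      (nhdsWithin 0 (Set.Ioi 0)) (nhds 2) := by
  set A : ℝ → ℝ := fun u =>
    ((Nr : ℝ) - 1) / (2 * (Nr : ℝ) - 1) * shiftCDF (2 * Nr) 2 Nr u
      + ((Nr : ℝ) + 2) / (2 * (2 * (Nr : ℝ) - 1)) * shiftCDF (2 * Nr) 3 Nr u
      + ∑ k ∈ Finset.Icc 4 (Nr + 1),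
          (2 * (Nr : ℝ) * (Nr.choose (k - 1) : ℝ))
            / ((2 * (Nr : ℝ) - ((k : ℝ) - 1)) * (((2 * Nr).choose (k - 1) : ℝ)))
            * shiftCDF (2 * Nr) k Nr u with hA
  have hcont : Continuous A := by
    rw [hA]
    refine ((continuous_const.mul (continuous_shiftCDF _ _ _)).add
      (continuous_const.mul (continuous_shiftCDF _ _ _))).add
      (continuous_finset_sum _ fun k _ => continuous_const.mul (continuous_shiftCDF _ _ _))
  have hA0 : A 0 = 2 := by
    rw [hA]
    simp only
    rw [shiftCDF_zero _ _ _ (by omega), shiftCDF_zero _ _ _ (by omega)]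
    rw [Finset.sum_eq_single (Nr + 1)]
    · rw [shiftCDF_top Nr (by omega)]
      have h1 : Nr + 1 - 1 = Nr := by omega
      rw [h1]
      have hc0 : ((2 * Nr).choose Nr : ℝ) ≠ 0 := by
        have := Nat.choose_pos (show Nr ≤ 2 * Nr by omega)
        positivity
      have h2 : (2 * (Nr : ℝ) - (((Nr + 1 : ℕ) : ℝ) - 1)) = (Nr : ℝ) := by
        push_cast; ring
      rw [h2, Nat.choose_self]
      have hNr0 : (Nr : ℝ) ≠ 0 := by positivity
      field_simp
      ring
    · intro k hk hkne
      rw [shiftCDF_zero _ _ _ (by simp at hk; omega), mul_zero]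
    · intro h
      exact absurd (Finset.mem_Icc.mpr ⟨by omega, by omega⟩) h
  have heq : ∀ u ∈ Set.Ioi (0:ℝ),
      A u =
      (((Nr : ℝ) - 1) / (2 * (Nr : ℝ) - 1) * orderCDF (2 * Nr) 2 u
          + ((Nr : ℝ) + 2) / (2 * (2 * (Nr : ℝ) - 1)) * orderCDF (2 * Nr) 3 u
          + ∑ k ∈ Finset.Icc 4 (Nr + 1),
              (2 * (Nr : ℝ) * (Nr.choose (k - 1) : ℝ))
                / ((2 * (Nr : ℝ) - ((k : ℝ) - 1)) * (((2 * Nr).choose (k - 1) : ℝ)))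
                * orderCDF (2 * Nr) k u) / u ^ Nr := by
    intro u hu
    have hu0 : (u : ℝ) ≠ 0 := ne_of_gt hu
    have hupow : u ^ Nr ≠ 0 := pow_ne_zero _ hu0
    rw [orderCDF_eq_shift (2 * Nr) 2 Nr (by omega) u,
      orderCDF_eq_shift (2 * Nr) 3 Nr (by omega) u]
    rw [Finset.sum_congr rfl (fun k hk => by
      rw [orderCDF_eq_shift (2 * Nr) k Nr (by simp at hk; omega) u])]
    rw [hA]
    simp only
    rw [eq_div_iff hupow, add_mul, add_mul, Finset.sum_mul]
    congr 1
    · ring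
    · exact Finset.sum_congr rfl fun k _ => by ring
  have htend : Filter.Tendsto A (nhdsWithin 0 (Set.Ioi 0)) (nhds 2) := by
    rw [← hA0]
    exact (hcont.tendsto 0).mono_left nhdsWithin_le_nhds
  refine htend.congr' ?_
  exact Filter.eventuallyEq_of_mem self_mem_nhdsWithin heq
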